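/- Let a and b be integers with 0 < a < b and gcd(a, b) = 1, and let K = {0, a, b}. Then K is b-arithmetic in ℤ (i.e. the system A(K) has a nontrivial bounded complex solution) if and only if the cyclotomic polynomial Φ_3(X) = 1 + X + X² divides the mask polynomial P_K(X) = 1 + X^a + X^b in ℤ[X]. -/

import Mathlib

open Polynomial

namespace Stmt4Aux

/-- The shift operator on two-sided sequences. -/
noncomputable def S : Module.End ℂ (ℤ → ℂ) :=
  { toFun := fun x n => x (n + 1)
    map_add' := fun _ _ => rfl
    map_smul' := fun _ _ => rfl }

lemma S_pow_apply (k : ℕ) (x : ℤ → ℂ) (n : ℤ) : ((S ^ k) x) n = x (n + k) := by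
  induction k generalizing x n with
  | zero => simp
  | succ k ih =>
    have h1 : (S ^ (k+1)) x = S ((S ^ k) x) := by
      rw [pow_succ', Module.End.mul_apply]
    rw [h1]
    show ((S ^ k) x) (n + 1) = x (n + (k+1))
    rw [ih]
    congr 1
    push_cast
    ring

def Bdd (x : ℤ → ℂ) : Prop := ∃ M : ℝ, ∀ n : ℤ, ‖x n‖ ≤ M

lemma bdd_aeval (p : ℂ[X]) (x : ℤ → ℂ) (hx : Bdd x) : Bdd ((aeval S p) x) := by
  induction p using Polynomial.induction_on' with
  | add p q hp hq =>
    obtain ⟨M, hM⟩ := hp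
    obtain ⟨N, hN⟩ := hq
    refine ⟨M + N, fun n => ?_⟩
    rw [map_add, LinearMap.add_apply]
    exact (norm_add_le _ _).trans (add_le_add (hM n) (hN n))
  | monomial k c =>
    obtain ⟨M, hM⟩ := hx
    refine ⟨‖c‖ * M, fun n => ?_⟩
    have h1 : (aeval S ((monomial k) c)) x n = c * x (n + k) := by
      rw [← C_mul_X_pow_eq_monomial, map_mul, aeval_C, aeval_X_pow,
        Module.End.mul_apply, Module.algebraMap_end_apply]
      show c * ((S ^ k) x) n = _
      rw [S_pow_apply]
    rw [h1, norm_mul]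
    exact mul_le_mul_of_nonneg_left (hM _) (norm_nonneg c)

lemma eig_zero {z : ℂ} (hz : ‖z‖ ≠ 1) {y : ℤ → ℂ} (hb : Bdd y)
    (h : ∀ n : ℤ, y (n + 1) = z * y n) : y = 0 := by
  rcases eq_or_ne z 0 with rfl | hz0
  · funext n
    have := h (n - 1)
    simpa using this
  · have key : ∀ n : ℤ, y n = z ^ n * y 0 := by
      intro n
      induction n using Int.induction_on with
      | zero => simp
      | succ k ih => rw [h k, ih, zpow_add_one₀ hz0]; ring
      | pred k ih =>
        have h1 := h (-(k:ℤ) - 1)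
        rw [sub_add_cancel, ih] at h1
        have h2 : y (-(k:ℤ) - 1) = z⁻¹ * (z ^ (-(k:ℤ)) * y 0) := by
          rw [h1, ← mul_assoc, inv_mul_cancel₀ hz0, one_mul]
        rw [h2, zpow_sub_one₀ hz0]
        ring
    rcases eq_or_ne (y 0) 0 with h0 | h0
    · funext n; rw [key n, h0, mul_zero]; rfl
    · exfalso
      obtain ⟨M, hM⟩ := hb
      have hMb : ∀ n : ℤ, ‖z‖ ^ n ≤ M / ‖y 0‖ := by
        intro n
        have := hM n
        rw [key n, norm_mul, norm_zpow] at this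
        rw [le_div_iff₀ (norm_pos_iff.2 h0)]
        exact this
      have h1 : 0 < ‖z‖ := norm_pos_iff.2 hz0
      rcases lt_or_gt_of_ne hz with hlt | hgt
      · have h2 : 1 < ‖z‖⁻¹ := one_lt_inv_iff₀.mpr ⟨h1, hlt⟩
        obtain ⟨n, hn⟩ := pow_unbounded_of_one_lt (M / ‖y 0‖) h2
        have := hMb (-(n:ℤ))
        rw [zpow_neg, ← inv_zpow, zpow_natCast] at this
        linarith
      · obtain ⟨n, hn⟩ := pow_unbounded_of_one_lt (M / ‖y 0‖) hgt
        have := hMb (n:ℤ)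
        rw [zpow_natCast] at this
        linarith

lemma multiset_zero (s : Multiset ℂ) (hs : ∀ z ∈ s, ‖z‖ ≠ 1) (x : ℤ → ℂ) (hx : Bdd x)
    (h : (aeval S (s.map fun z => X - C z).prod) x = 0) : x = 0 := by
  induction s using Multiset.induction_on generalizing x with
  | empty => simpa using h
  | cons z s ih =>
    rw [Multiset.map_cons, Multiset.prod_cons, map_mul, Module.End.mul_apply] at h
    set y := (aeval S (s.map fun z => X - C z).prod) x with hy
    have hby : Bdd y := bdd_aeval _ x hx
    have hrec : ∀ n : ℤ, y (n + 1) = z * y n := by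
      intro n
      have h0 := congrFun h n
      simp only [map_sub, aeval_X, aeval_C, LinearMap.sub_apply,
        Module.algebraMap_end_apply, Pi.zero_apply, Pi.smul_apply, smul_eq_mul,
        Pi.sub_apply] at h0
      have h4 : y (n + 1) - z * y n = 0 := h0
      exact sub_eq_zero.mp h4
    exact ih (fun w hw => hs w (Multiset.mem_cons_of_mem hw)) x hx
      (eig_zero (hs z (Multiset.mem_cons_self z s)) hby hrec)

end Stmt4Aux

namespace Stmt4Aux

lemma unit_sum {u v : ℂ} (hu : ‖u‖ = 1) (hv : ‖v‖ = 1)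
    (h : 1 + u + v = 0) : u ^ 2 + u + 1 = 0 := by
  have hv' : v = -1 - u := by linear_combination h
  have h1 : u * (starRingEnd ℂ) u = 1 := by
    have hn : Complex.normSq u = 1 := by rw [← Complex.sq_norm, hu]; norm_num
    rw [Complex.mul_conj, hn, Complex.ofReal_one]
  have h2 : (-1 - u) * ((starRingEnd ℂ) (-1 - u)) = 1 := by
    have hn : Complex.normSq (-1 - u) = 1 := by
      rw [← hv', ← Complex.sq_norm, hv]; norm_num
    rw [Complex.mul_conj, hn, Complex.ofReal_one]
  have h2' : (-1 - u) * (-1 - (starRingEnd ℂ) u) = 1 := by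
    have : ((starRingEnd ℂ) (-1 - u)) = -1 - (starRingEnd ℂ) u := by
      simp [map_sub]
    rw [← this]; exact h2
  have h3 : u + (starRingEnd ℂ) u = -1 := by linear_combination h2' - h1
  linear_combination u * h3 - h1

lemma circle_root (a b : ℕ) (ha : 0 < a) (hab : a < b) (hgcd : Nat.gcd a b = 1)
    {z : ℂ} (hz : ‖z‖ = 1) (h : 1 + z ^ a + z ^ b = 0) :
    Polynomial.cyclotomic 3 ℤ ∣ (1 + X ^ a + X ^ b : ℤ[X]) := by
  have hz0 : z ≠ 0 := by
    intro hc; rw [hc] at hz; simp at hz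
  have hu : ‖z ^ a‖ = 1 := by rw [norm_pow, hz, one_pow]
  have hv : ‖z ^ b‖ = 1 := by rw [norm_pow, hz, one_pow]
  have hqu : (z ^ a) ^ 2 + z ^ a + 1 = 0 := unit_sum hu hv h
  have hqv : (z ^ b) ^ 2 + z ^ b + 1 = 0 := by
    refine unit_sum hv hu ?_
    linear_combination h
  have hu3 : z ^ (3 * a) = 1 := by
    rw [mul_comm, pow_mul]
    linear_combination (z ^ a - 1) * hqu
  have hv3 : z ^ (3 * b) = 1 := by
    rw [mul_comm, pow_mul]
    linear_combination (z ^ b - 1) * hqv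
  have hz3 : z ^ 3 = 1 := by
    have hd : orderOf z ∣ 3 := by
      have d1 := orderOf_dvd_of_pow_eq_one hu3
      have d2 := orderOf_dvd_of_pow_eq_one hv3
      have := Nat.dvd_gcd d1 d2
      rwa [Nat.gcd_mul_left, hgcd, mul_one] at this
    exact orderOf_dvd_iff_pow_eq_one.mp hd
  have hz1 : z ≠ 1 := by
    intro hc; rw [hc] at h; norm_num at h
  have hprim : IsPrimitiveRoot z 3 := by
    refine ⟨hz3, fun l hl => ?_⟩
    have hl3 : z ^ (l % 3) = 1 := by
      conv at hl => rw [← Nat.div_add_mod l 3]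
      rwa [pow_add, pow_mul, hz3, one_pow, one_mul] at hl
    have hcases : l % 3 = 0 ∨ l % 3 = 1 ∨ l % 3 = 2 := by omega
    rcases hcases with h0 | h1 | h2
    · exact Nat.dvd_of_mod_eq_zero h0
    · exfalso; rw [h1, pow_one] at hl3; exact hz1 hl3
    · exfalso
      rw [h2] at hl3
      exact hz1 (by linear_combination hz3 - z * hl3)
  have hQ : cyclotomic 3 ℚ = minpoly ℚ z := cyclotomic_eq_minpoly_rat hprim (by norm_num)
  have haev : (aeval z) ((1 + X ^ a + X ^ b : ℤ[X]).map (algebraMap ℤ ℚ)) = 0 := by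
    rw [aeval_map_algebraMap]
    simp only [map_add, map_one, map_pow, aeval_X]
    exact h
  have hdvd : (cyclotomic 3 ℤ).map (Int.castRingHom ℚ) ∣
      (1 + X ^ a + X ^ b : ℤ[X]).map (Int.castRingHom ℚ) := by
    rw [map_cyclotomic_int, hQ]
    exact minpoly.dvd ℚ z haev
  exact (map_dvd_map _ Int.cast_injective (cyclotomic.monic 3 ℤ)).mp hdvd

end Stmt4Aux

open Stmt4Aux

theorem stmt_4 (a b : ℕ) (ha : 0 < a) (hab : a < b) (hgcd : Nat.gcd a b = 1) :
    (∃ x : ℤ → ℂ, x ≠ 0 ∧ (∃ M : ℝ, ∀ n : ℤ, ‖x n‖ ≤ M) ∧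
        ∀ n : ℤ, ∑ s ∈ ({0, a, b} : Finset ℕ), x (n + (s : ℤ)) = 0) ↔
      Polynomial.cyclotomic 3 ℤ ∣
        (1 + Polynomial.X ^ a + Polynomial.X ^ b : Polynomial ℤ) := by
  have hmem0 : (0:ℕ) ∉ ({a, b} : Finset ℕ) := by
    simp only [Finset.mem_insert, Finset.mem_singleton]; omega
  have hmema : a ∉ ({b} : Finset ℕ) := by
    simp only [Finset.mem_singleton]; omega
  constructor
  · rintro ⟨x, hx0, ⟨M, hM⟩, hsum⟩
    by_contra hno
    set P : ℂ[X] := 1 + X ^ a + X ^ b with hP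
    have hmonic : P.Monic := by
      have hre : P = X ^ b + (1 + X ^ a) := by rw [hP]; ring
      rw [hre]
      apply monic_X_pow_add
      apply lt_of_le_of_lt (degree_add_le _ _)
      rw [degree_one, degree_X_pow]
      have h1 : ((0:ℕ) : WithBot ℕ) < (b : WithBot ℕ) := by
        exact_mod_cast ha.trans hab
      have h2 : ((a:ℕ) : WithBot ℕ) < (b : WithBot ℕ) := by exact_mod_cast hab
      exact max_lt (by exact_mod_cast h1) h2
    have hroots : ∀ w ∈ P.roots, ‖w‖ ≠ 1 := by
      intro w hw hc
      have hev : 1 + w ^ a + w ^ b = 0 := by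
        have := isRoot_of_mem_roots hw
        simpa [hP, IsRoot] using this
      refine hno (circle_root a b ha hab hgcd ?_ hev)
      exact hc
    have hK : ∀ n : ℤ, x n + x (n + a) + x (n + b) = 0 := by
      intro n
      have hs := hsum n
      rw [Finset.sum_insert hmem0, Finset.sum_insert hmema, Finset.sum_singleton] at hs
      simpa [add_assoc] using hs
    have heq : (aeval S P) x = 0 := by
      funext n
      have expand : (aeval S P) x n = x n + x (n + a) + x (n + b) := by
        rw [hP]
        simp only [map_add, map_one, map_pow, aeval_X, LinearMap.add_apply,
          Module.End.one_apply, Pi.add_apply, S_pow_apply]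
      rw [expand, hK n]; rfl
    have hxz : x = 0 := by
      apply multiset_zero P.roots hroots x ⟨M, fun n => by
        exact hM n⟩
      rw [← (IsAlgClosed.splits P).eq_prod_roots_of_monic hmonic]
      exact heq
    exact hx0 hxz
  · intro hdvd
    set ω : ℂ := Complex.exp (2 * Real.pi * Complex.I / 3) with hω
    have hprim : IsPrimitiveRoot ω 3 := by
      have := Complex.isPrimitiveRoot_exp 3 (by norm_num)
      simpa [hω] using this
    have hω0 : ω ≠ 0 := Complex.exp_ne_zero _
    have habs : ‖ω‖ = 1 := by
      have h3 : ‖ω‖ ^ 3 = 1 := by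
        rw [← norm_pow, hprim.pow_eq_one, norm_one]
      nlinarith [norm_nonneg ω, sq_nonneg (‖ω‖ - 1),
        sq_nonneg (‖ω‖ + 1)]
    have hc0 : (aeval ω) (cyclotomic 3 ℤ) = 0 := by
      rw [aeval_def, ← eval_map, algebraMap_int_eq, map_cyclotomic_int]
      exact hprim.isRoot_cyclotomic (by norm_num)
    obtain ⟨Q, hQ⟩ := hdvd
    have hroot : 1 + ω ^ a + ω ^ b = 0 := by
      have h1 := congrArg (aeval ω) hQ
      rw [map_mul, hc0, zero_mul] at h1
      simp only [map_add, map_one, map_pow, aeval_X] at h1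
      exact h1
    refine ⟨fun n => ω ^ n, ?_, ⟨1, fun n => ?_⟩, fun n => ?_⟩
    · intro hcon
      have h0 := congrFun hcon 0
      simp at h0
    · rw [norm_zpow, habs, one_zpow]
    · rw [Finset.sum_insert hmem0, Finset.sum_insert hmema, Finset.sum_singleton]
      show ω ^ (n + ((0:ℕ):ℤ)) + (ω ^ (n + (a:ℤ)) + ω ^ (n + (b:ℤ))) = 0
      have e : ∀ s : ℕ, ω ^ (n + (s:ℤ)) = ω ^ n * ω ^ s := by
        intro s; rw [zpow_add₀ hω0, zpow_natCast]
      rw [e, e, e]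
      push_cast
      linear_combination (ω ^ n) * hroot
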